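/- Gradient decomposition into indirect and direct dependence (Equation 4): suppose the function component f : ℝ → S → B → ℝ may depend directly on the parameter, with t ↦ f t φ b having derivative f' φ b at t = θ for every (φ, b). Then t ↦ ∑_{b,φ} μ b * π t φ b * f t φ b has derivative at t = θ equal to ∑_{b,φ} μ b * π θ φ b * ((g φ b) / (π θ φ b)) * f θ φ b + ∑_{b,φ} μ b * π θ φ b * f' φ b; i.e. ∂E[f]/∂θ = E[(∂ log π(Φ|pa)/∂θ) f] + E[∂f/∂θ]. -/

import Mathlib

/-- Gradient decomposition into indirect and direct dependence (Equation 4):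
∂E[f]/∂θ = E[(∂ log π(Φ|pa)/∂θ) f] + E[∂f/∂θ]. -/
theorem gradient_decomposition
    {B S : Type*} [Fintype B] [Fintype S] [Nonempty B] [Nonempty S]
    (μ : B → ℝ) (hμ0 : ∀ b, 0 ≤ μ b) (hμ1 : ∑ b, μ b = 1)
    (π : ℝ → S → B → ℝ) (θ : ℝ)
    (hπ0 : ∀ t φ b, 0 ≤ π t φ b) (hπ1 : ∀ t b, ∑ φ, π t φ b = 1)
    (hπpos : ∀ φ b, 0 < π θ φ b)
    (g : S → B → ℝ) (hg : ∀ φ b, HasDerivAt (fun t => π t φ b) (g φ b) θ)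
    (f : ℝ → S → B → ℝ) (f' : S → B → ℝ)
    (hf : ∀ φ b, HasDerivAt (fun t => f t φ b) (f' φ b) θ) :
    HasDerivAt (fun t => ∑ b, ∑ φ, μ b * π t φ b * f t φ b)
      ((∑ b, ∑ φ, μ b * π θ φ b * ((g φ b / π θ φ b) * f θ φ b)) +
        ∑ b, ∑ φ, μ b * π θ φ b * f' φ b) θ := by
  have key : HasDerivAt (fun t => ∑ b, ∑ φ, μ b * π t φ b * f t φ b)
      (∑ b, ∑ φ, (μ b * (g φ b * f θ φ b) + μ b * π θ φ b * f' φ b)) θ := by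
    apply HasDerivAt.fun_sum
    intro b _
    apply HasDerivAt.fun_sum
    intro φ _
    have h : HasDerivAt (fun t => μ b * π t φ b * f t φ b)
        (μ b * g φ b * f θ φ b + μ b * π θ φ b * f' φ b) θ := (((hg φ b).const_mul (μ b)).mul (hf φ b))
    exact h.congr_deriv (by ring)
  have heq : (∑ b, ∑ φ, (μ b * (g φ b * f θ φ b) + μ b * π θ φ b * f' φ b)) =
      (∑ b, ∑ φ, μ b * π θ φ b * ((g φ b / π θ φ b) * f θ φ b)) +
        ∑ b, ∑ φ, μ b * π θ φ b * f' φ b := by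
    rw [← Finset.sum_add_distrib]
    apply Finset.sum_congr rfl
    intro b _
    rw [← Finset.sum_add_distrib]
    apply Finset.sum_congr rfl
    intro φ _
    have := (hπpos φ b).ne'
    field_simp
  exact heq ▸ key
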